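/- Let F be a field of order p^q with q an odd prime dividing p−1, let γ ∈ F^× have order ((p^q−1)/(p−1))_{q'} (the q'-part), λ a generator of the Sylow q-subgroup of F^×, and σ the Frobenius automorphism. Then the subgroup H = ⟨γ, λσ⟩ of F^× ⋊ Gal(F/F_p) is nonabelian and has a normal abelian subgroup of index q; consequently every irreducible complex character of H has degree 1 or q, i.e., cd(H) = {1, q}. -/

import Mathlib

open CategoryTheory

variable {G : Type} [Group G]

noncomputable def subRep (V : FDRep ℂ G) (U : Submodule ℂ V) (hU : ∀ g : G, ∀ v ∈ U, V.ρ g v ∈ U) :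
    Representation ℂ G U where
  toFun g := (V.ρ g).restrict (hU g)
  map_one' := by ext x; simp [LinearMap.restrict_apply]
  map_mul' g h := by ext x; simp [LinearMap.restrict_apply]

theorem invariant_bot_or_top (V : FDRep ℂ G) [hV : Simple V] (U : Submodule ℂ V)
    (hU : ∀ g : G, ∀ v ∈ U, V.ρ g v ∈ U) : U = ⊥ ∨ U = ⊤ := by
  by_cases hbot : U = ⊥
  · exact Or.inl hbot
  right
  obtain ⟨u, huU, hu0⟩ := Submodule.exists_mem_ne_zero_of_ne_bot hbot
  let W : FDRep ℂ G := FDRep.of (subRep V U hU)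
  let ι : W ⟶ V := ⟨(FGModuleCat.ofHom U.subtype : W.V ⟶ V.V), fun g => by
    ext x
    rfl⟩
  have hinj : Function.Injective ι.hom := fun x y hxy => Subtype.val_injective hxy
  haveI : Mono ι := ConcreteCategory.mono_of_injective ι hinj
  have hne : ι ≠ 0 := by
    intro h
    apply hu0
    have : ι.hom ⟨u, huU⟩ = (0 : W ⟶ V).hom ⟨u, huU⟩ := by rw [h]
    exact this
  haveI : IsIso ι := isIso_of_mono_of_nonzero hne
  rw [eq_top_iff]
  intro v _
  have h1 : (CategoryTheory.inv ι ≫ ι) = 𝟙 V := IsIso.inv_hom_id ι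
  have h2 : ι.hom ((CategoryTheory.inv ι).hom v) = v := by
    have h3 := ConcreteCategory.congr_hom (congrArg Action.Hom.hom h1) v
    exact h3
  rw [← h2]
  exact ((CategoryTheory.inv ι).hom v).2

theorem rep_dim_one_or_q {q p : ℕ} (hq : q.Prime) (hp : 2 ≤ p) (a h : G)
    (hgen : ∀ g : G, g ∈ Subgroup.closure {a, h})
    (r1 : h * a = a ^ p * h)
    (r2 : h ^ q * a = a * h ^ q)
    (r3 : a ^ (p ^ q - 1) = 1)
    (V : FDRep ℂ G) [Simple V] :
    Module.finrank ℂ V = 1 ∨ Module.finrank ℂ V = q := by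
  obtain ⟨q', rfl⟩ : ∃ q', q = q' + 1 := ⟨q - 1, (Nat.succ_pred_eq_of_pos hq.pos).symm⟩
  set T := V.ρ a with hT
  set S := V.ρ h with hS
  -- injectivity of each ρ g
  have hρinj : ∀ g : G, ∀ w : V, V.ρ g w = 0 → w = 0 := by
    intro g w hw
    have : V.ρ g⁻¹ (V.ρ g w) = w := by
      rw [← Module.End.mul_apply, ← map_mul, inv_mul_cancel, map_one, Module.End.one_apply]
    rw [hw, map_zero] at this
    exact this.symm
  -- conjugation relation
  have r1k : ∀ k : ℕ, h * a ^ k = a ^ (p * k) * h := by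
    intro k
    induction k with
    | zero => simp
    | succ k ih =>
      rw [pow_succ, ← mul_assoc, ih, mul_assoc, r1, Nat.mul_succ, pow_add, mul_assoc]
  have key : ∀ k i : ℕ, a ^ k * h⁻¹ ^ i = h⁻¹ ^ i * a ^ (k * p ^ i) := by
    intro k i
    induction i generalizing k with
    | zero => simp
    | succ i ih =>
      have h1 : a ^ k * h⁻¹ = h⁻¹ * a ^ (p * k) := by
        have := r1k k
        calc a ^ k * h⁻¹ = h⁻¹ * (h * a ^ k) * h⁻¹ := by group
        _ = h⁻¹ * (a ^ (p * k) * h) * h⁻¹ := by rw [this]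
        _ = h⁻¹ * a ^ (p * k) := by group
      calc a ^ k * h⁻¹ ^ (i + 1) = (a ^ k * h⁻¹) * h⁻¹ ^ i := by rw [pow_succ', ← mul_assoc]
      _ = h⁻¹ * (a ^ (p * k) * h⁻¹ ^ i) := by rw [h1, mul_assoc]
      _ = h⁻¹ * (h⁻¹ ^ i * a ^ (p * k * p ^ i)) := by rw [ih]
      _ = h⁻¹ ^ (i + 1) * a ^ (k * p ^ (i + 1)) := by
        have hexp : p * k * p ^ i = k * p ^ (i + 1) := by ring
        rw [hexp, pow_succ' h⁻¹ i, mul_assoc]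
  -- nontriviality
  haveI : Nontrivial V := by
    by_contra hnt
    rw [not_nontrivial_iff_subsingleton] at hnt
    have hall : ∀ x y : V, x = y := fun x y => Subsingleton.elim x y
    have : (𝟙 V : V ⟶ V) = 0 := by
      apply Action.hom_ext
      apply FGModuleCat.hom_ext
      apply LinearMap.ext
      intro x
      exact hall _ _
    exact id_nonzero V this
  -- eigenvalue of T
  obtain ⟨μ, hμ⟩ := Module.End.exists_eigenvalue T
  -- C = ρ (h^q) preserves eigenspace
  set C := V.ρ (h ^ (q' + 1)) with hC
  have hCT : ∀ w : V, C (T w) = T (C w) := by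
    intro w
    rw [← Module.End.mul_apply, ← Module.End.mul_apply, ← map_mul, ← map_mul, r2]
  have hCE : ∀ w ∈ Module.End.eigenspace T μ, C w ∈ Module.End.eigenspace T μ := by
    intro w hw
    rw [Module.End.mem_eigenspace_iff] at hw ⊢
    rw [← hCT, hw, map_smul]
  have hEnt : Nontrivial (Module.End.eigenspace T μ) :=
    Submodule.nontrivial_iff_ne_bot.mpr hμ
  obtain ⟨ν, hν⟩ := Module.End.exists_eigenvalue (C.restrict hCE)
  obtain ⟨v', hv'⟩ := hν.exists_hasEigenvector
  set v : V := (v' : V) with hv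
  have hv0 : v ≠ 0 := fun hh => hv'.2 (Subtype.ext hh)
  have hTv : T v = μ • v := Module.End.mem_eigenspace_iff.mp v'.2
  have hCv : C v = ν • v := by
    have := hv'.1
    rw [Module.End.mem_eigenspace_iff] at this
    have h2 := congrArg (Subtype.val) this
    simpa using h2
  -- powers of a act on v
  have haT : ∀ n : ℕ, V.ρ (a ^ n) v = μ ^ n • v := by
    intro n
    induction n with
    | zero => simp
    | succ n ih =>
      rw [pow_succ, map_mul, Module.End.mul_apply, ← hT, hTv, map_smul, ih, smul_smul, ← pow_succ']
  set vi : ℕ → V := fun i => V.ρ (h⁻¹ ^ i) v with hvi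
  have hvi0 : ∀ i, vi i ≠ 0 := by
    intro i hh
    exact hv0 (hρinj _ _ hh)
  have hTvi : ∀ i, T (vi i) = (μ ^ p ^ i) • vi i := by
    intro i
    have h1 : T (vi i) = V.ρ (a * h⁻¹ ^ i) v := by
      rw [map_mul, Module.End.mul_apply, ← hT]
    rw [h1]
    have h2 := key 1 i
    rw [one_mul] at h2
    rw [pow_one] at h2
    rw [h2, map_mul, Module.End.mul_apply, haT, map_smul]
  have hSvi : ∀ i, S (vi (i + 1)) = vi i := by
    intro i
    have h1 : h * h⁻¹ ^ (i + 1) = h⁻¹ ^ i := by group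
    rw [hvi]
    show V.ρ h (V.ρ (h⁻¹ ^ (i+1)) v) = V.ρ (h⁻¹ ^ i) v
    rw [← Module.End.mul_apply, ← map_mul, h1]
  have hSv0 : S (vi 0) = ν • vi q' := by
    have hveq : v = ν • V.ρ ((h ^ (q' + 1))⁻¹) v := by
      have h1 : V.ρ ((h ^ (q' + 1))⁻¹) (C v) = v := by
        rw [← Module.End.mul_apply, ← map_mul, inv_mul_cancel, map_one, Module.End.one_apply]
      rw [hCv, map_smul] at h1
      exact h1.symm
    have h2 : h * (h ^ (q' + 1))⁻¹ = h⁻¹ ^ q' := by group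
    calc S (vi 0) = V.ρ h v := by simp [hvi, hS]
    _ = V.ρ h (ν • V.ρ ((h ^ (q' + 1))⁻¹) v) := by rw [← hveq]
    _ = ν • V.ρ (h * (h ^ (q' + 1))⁻¹) v := by rw [map_smul]; congr 1; rw [map_mul, Module.End.mul_apply]
    _ = ν • vi q' := by rw [h2]
  -- invariance machinery
  have inv_all : ∀ (U : Submodule ℂ V), (∀ w ∈ U, T w ∈ U) → (∀ w ∈ U, S w ∈ U) →
      ∀ g : G, ∀ w ∈ U, V.ρ g w ∈ U := by
    intro U hUT hUS g
    have hinv : ∀ g : G, (∀ w ∈ U, V.ρ g w ∈ U) → ∀ w ∈ U, V.ρ g⁻¹ w ∈ U := by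
      intro g hg w hw
      set e : U →ₗ[ℂ] U := (V.ρ g).restrict hg with he
      have hei : Function.Injective e := by
        intro x y hxy
        apply Subtype.ext
        have h1 : V.ρ g (x : V) = V.ρ g (y : V) := by
          have := congrArg (Subtype.val) hxy
          simpa [he, LinearMap.restrict_apply] using this
        by_contra hne
        have h2 : V.ρ g ((x : V) - (y : V)) = 0 := by rw [map_sub, h1, sub_self]
        exact hne (by
          have := hρinj g _ h2
          exact sub_eq_zero.mp this)
      have hes : Function.Surjective e := LinearMap.injective_iff_surjective.mp hei
      obtain ⟨u, hu⟩ := hes ⟨w, hw⟩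
      have h3 : V.ρ g (u : V) = w := by
        have := congrArg (Subtype.val) hu
        simpa [he, LinearMap.restrict_apply] using this
      have h4 : V.ρ g⁻¹ w = (u : V) := by
        rw [← h3, ← Module.End.mul_apply, ← map_mul, inv_mul_cancel, map_one,
          Module.End.one_apply]
      rw [h4]
      exact u.2
    have hmem := hgen g
    induction hmem using Subgroup.closure_induction with
    | mem x hx =>
      rcases hx with rfl | hx
      · exact hUT
      · rw [Set.mem_singleton_iff] at hx
        subst hx
        exact hUS
    | one => intro w hw; simpa using hw
    | mul x y hx hy ihx ihy =>
      intro w hw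
      rw [map_mul, Module.End.mul_apply]
      exact ihx _ (ihy _ hw)
    | inv x hx ih => exact hinv x ih
  -- the span of the vi's
  set U : Submodule ℂ V := Submodule.span ℂ (Set.range fun i : Fin (q' + 1) => vi i) with hU
  have hviU : ∀ i : Fin (q' + 1), vi i ∈ U := fun i =>
    Submodule.subset_span (Set.mem_range_self i)
  have hUT : ∀ w ∈ U, T w ∈ U := by
    intro w hw
    induction hw using Submodule.span_induction with
    | mem x hx =>
      obtain ⟨i, rfl⟩ := hx
      rw [hTvi]
      exact Submodule.smul_mem _ _ (hviU i)
    | zero => simp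
    | add x y hx hy ihx ihy => rw [map_add]; exact Submodule.add_mem _ ihx ihy
    | smul c x hx ih => rw [map_smul]; exact Submodule.smul_mem _ _ ih
  have hUS : ∀ w ∈ U, S w ∈ U := by
    intro w hw
    induction hw using Submodule.span_induction with
    | mem x hx =>
      obtain ⟨i, rfl⟩ := hx
      show S (vi (i : ℕ)) ∈ U
      obtain ⟨iv, hlt⟩ := i
      show S (vi iv) ∈ U
      cases iv with
      | zero => rw [hSv0]; exact Submodule.smul_mem _ _ (hviU ⟨q', Nat.lt_succ_self q'⟩)
      | succ j => rw [hSvi]; exact hviU ⟨j, by omega⟩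
    | zero => simp
    | add x y hx hy ihx ihy => rw [map_add]; exact Submodule.add_mem _ ihx ihy
    | smul c x hx ih => rw [map_smul]; exact Submodule.smul_mem _ _ ih
  have hUtop : U = ⊤ := by
    rcases invariant_bot_or_top V U (inv_all U hUT hUS) with hbot | htop
    · exfalso
      have : vi 0 ∈ (⊥ : Submodule ℂ V) := hbot ▸ hviU ⟨0, Nat.succ_pos q'⟩
      exact hvi0 0 (Submodule.mem_bot ℂ |>.mp this)
    · exact htop
  have hrank_le : Module.finrank ℂ V ≤ q' + 1 := by
    classical
    have h1 : Module.finrank ℂ V = Module.finrank ℂ U := by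
      rw [hUtop]; exact (finrank_top ℂ V).symm
    have h2 := finrank_span_le_card (R := ℂ) (Set.range fun i : Fin (q' + 1) => vi i)
    rw [← hU] at h2
    have h3 : (Set.range fun i : Fin (q' + 1) => vi (i : ℕ)).toFinset.card ≤ q' + 1 := by
      rw [Set.toFinset_card]
      simpa using Fintype.card_range_le (fun i : Fin (q' + 1) => vi (i : ℕ))
    omega
  by_cases hcase : μ ^ p = μ
  · -- T is scalar; find an eigenvector of S; dimension 1
    left
    have hall : ∀ i : ℕ, μ ^ p ^ i = μ := by
      intro i
      induction i with
      | zero => simp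
      | succ i ih => rw [pow_succ, pow_mul, ih, hcase]
    have hTscal : ∀ w : V, T w = μ • w := by
      intro w
      have hw : w ∈ U := hUtop ▸ Submodule.mem_top
      induction hw using Submodule.span_induction with
      | mem x hx =>
        obtain ⟨i, rfl⟩ := hx
        rw [hTvi, hall]
      | zero => simp
      | add x y hx hy ihx ihy => rw [map_add, ihx, ihy, smul_add]
      | smul c x hx ih => rw [map_smul, ih, smul_comm]
    obtain ⟨τ, hτ⟩ := Module.End.exists_eigenvalue S
    obtain ⟨w, hwE, hw0⟩ := hτ.exists_hasEigenvector
    have hSw : S w = τ • w := Module.End.mem_eigenspace_iff.mp hwE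
    set U' : Submodule ℂ V := Submodule.span ℂ {w} with hU'
    have hwU' : w ∈ U' := Submodule.subset_span rfl
    have hU'T : ∀ x ∈ U', T x ∈ U' := fun x hx => by
      rw [hTscal]; exact Submodule.smul_mem _ _ hx
    have hU'S : ∀ x ∈ U', S x ∈ U' := by
      intro x hx
      induction hx using Submodule.span_induction with
      | mem x hx =>
        rw [Set.mem_singleton_iff] at hx
        subst hx
        rw [hSw]
        exact Submodule.smul_mem _ _ hwU'
      | zero => simp
      | add x y hx hy ihx ihy => rw [map_add]; exact Submodule.add_mem _ ihx ihy
      | smul c x hx ih => rw [map_smul]; exact Submodule.smul_mem _ _ ih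
    have hU'top : U' = ⊤ := by
      rcases invariant_bot_or_top V U' (inv_all U' hU'T hU'S) with hbot | htop
      · exact absurd (Submodule.mem_bot ℂ |>.mp (hbot ▸ hwU')) hw0
      · exact htop
    have := finrank_span_singleton (K := ℂ) hw0
    rw [← hU'] at this
    rw [← finrank_top ℂ V, ← hU'top, this]
  · -- eigenvalues distinct; dimension q
    right
    have hμ0 : μ ≠ 0 := by
      intro h0
      apply hv0
      apply hρinj a
      rw [← hT, hTv, h0, zero_smul]
    have hpq1 : 0 < p ^ (q' + 1) - 1 := by
      have : 2 ≤ p ^ (q' + 1) := le_trans hp (Nat.le_self_pow (Nat.succ_ne_zero q') p)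
      omega
    have hμpow : μ ^ (p ^ (q' + 1) - 1) = 1 := by
      have h1 : V.ρ (a ^ (p ^ (q' + 1) - 1)) v = v := by rw [r3, map_one, Module.End.one_apply]
      rw [haT] at h1
      by_contra hne
      have h2 : (μ ^ (p ^ (q' + 1) - 1) - 1) • v = 0 := by
        rw [sub_smul, one_smul, h1, sub_self]
      rcases smul_eq_zero.mp h2 with h3 | h3
      · exact hne (by linear_combination h3)
      · exact hv0 h3
    set μu : ℂˣ := Units.mk0 μ hμ0 with hμu
    have hμupow : μu ^ (p ^ (q' + 1) - 1) = 1 := by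
      ext
      push_cast [hμu]
      exact hμpow
    have hfin : IsOfFinOrder μu := isOfFinOrder_iff_pow_eq_one.mpr ⟨_, hpq1, hμupow⟩
    set n : ℕ := orderOf μu with hn
    have hn0 : 0 < n := hfin.orderOf_pos
    haveI : NeZero n := ⟨hn0.ne'⟩
    have hnd : n ∣ p ^ (q' + 1) - 1 := orderOf_dvd_of_pow_eq_one hμupow
    have hpn : ((p : ZMod n)) ^ (q' + 1) = 1 := by
      have h1 : ((p ^ (q' + 1) : ℕ) : ZMod n) = ((p ^ (q' + 1) - 1 : ℕ) : ZMod n) + 1 := by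
        have : p ^ (q' + 1) = (p ^ (q' + 1) - 1) + 1 := by omega
        rw [this]; push_cast; ring
      have h2 : ((p ^ (q' + 1) - 1 : ℕ) : ZMod n) = 0 :=
        (ZMod.natCast_eq_zero_iff _ _).mpr hnd
      have h3 : ((p ^ (q' + 1) : ℕ) : ZMod n) = 1 := by rw [h1, h2, zero_add]
      rw [← h3]; push_cast; ring
    have hunit : IsUnit ((p : ZMod n)) := IsUnit.of_pow_eq_one hpn (Nat.succ_ne_zero q')
    set piu : (ZMod n)ˣ := hunit.unit with hpiu
    have hpiuval : (piu : ZMod n) = (p : ZMod n) := hunit.unit_spec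
    have hpiupow : piu ^ (q' + 1) = 1 := by
      ext
      push_cast [hpiuval]
      exact hpn
    have hpiu1 : piu ≠ 1 := by
      intro h1
      apply hcase
      have h2 : ((p : ZMod n)) = 1 := by rw [← hpiuval, h1]; rfl
      have h3 : (p : ZMod n) = ((1 : ℕ) : ZMod n) := by rw [h2]; norm_num
      have h4 : n ∣ p - 1 := by
        have := (ZMod.natCast_eq_natCast_iff p 1 n).mp h3
        have h5 : (1 : ℕ) ≡ p [MOD n] := this.symm
        exact (Nat.modEq_iff_dvd' (by omega)).mp h5
      have h6 : μu ^ (p - 1) = 1 := by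
        obtain ⟨k, hk⟩ := h4
        have hone := pow_orderOf_eq_one μu
        rw [← hn] at hone
        rw [hk, pow_mul, hone, one_pow]
      have h7 : μ ^ (p - 1) = 1 := by
        have := congrArg (Units.val) h6
        push_cast [hμu] at this
        exact this
      have h8 : p - 1 + 1 = p := by omega
      calc μ ^ p = μ ^ (p - 1) * μ := by rw [← pow_succ, h8]
      _ = μ := by rw [h7, one_mul]
    have hord : orderOf piu = q' + 1 := by
      have h1 : orderOf piu ∣ q' + 1 := orderOf_dvd_of_pow_eq_one hpiupow
      rcases (Nat.Prime.eq_one_or_self_of_dvd hq _ h1) with h2 | h2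
      · exact absurd (orderOf_eq_one_iff.mp h2) hpiu1
      · exact h2
    have hμinj : Function.Injective (fun i : Fin (q' + 1) => μ ^ p ^ (i : ℕ)) := by
      intro i j hij
      simp only at hij
      have hu : μu ^ p ^ (i : ℕ) = μu ^ p ^ (j : ℕ) := by
        ext; push_cast [hμu]; exact hij
      have hmod : p ^ (i : ℕ) ≡ p ^ (j : ℕ) [MOD n] := by
        rw [hn]; exact pow_eq_pow_iff_modEq.mp hu
      have hz : ((p ^ (i : ℕ) : ℕ) : ZMod n) = ((p ^ (j : ℕ) : ℕ) : ZMod n) :=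
        (ZMod.natCast_eq_natCast_iff _ _ _).mpr hmod
      have hpz : ((p : ZMod n)) ^ (i : ℕ) = ((p : ZMod n)) ^ (j : ℕ) := by
        push_cast at hz
        exact hz
      have hpiz : piu ^ (i : ℕ) = piu ^ (j : ℕ) := by
        ext; push_cast [hpiuval]; exact hpz
      have hi : (i : ℕ) ∈ Set.Iio (orderOf piu) := by rw [hord]; exact i.isLt
      have hj : (j : ℕ) ∈ Set.Iio (orderOf piu) := by rw [hord]; exact j.isLt
      exact Fin.ext (pow_injOn_Iio_orderOf hi hj hpiz)
    have hEV : ∀ i : Fin (q' + 1), Module.End.HasEigenvector T (μ ^ p ^ (i : ℕ)) (vi (i : ℕ)) :=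
      fun i => ⟨Module.End.mem_eigenspace_iff.mpr (hTvi i), hvi0 i⟩
    have hLI : LinearIndependent ℂ (fun i : Fin (q' + 1) => vi (i : ℕ)) :=
      Module.End.eigenvectors_linearIndependent' T _ hμinj _ hEV
    have hge : q' + 1 ≤ Module.finrank ℂ V := by
      have := hLI.fintype_card_le_finrank
      simpa using this
    omega

theorem numth {p q : ℕ} (hp : p.Prime) (hq : q.Prime) (hodd : Odd q) (hdvd : q ∣ p - 1) :
    p - 1 < ((p ^ q - 1) / (p - 1)) / q ^ (((p ^ q - 1) / (p - 1)).factorization q) := by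
  have hp2 : 2 ≤ p := hp.two_le
  have hq2 : 2 ≤ q := hq.two_le
  have hq3 : 3 ≤ q := by
    have hne2 : q ≠ 2 := by rintro rfl; exact (by decide : ¬ Odd 2) hodd
    omega
  have hp3 : 3 ≤ p := by
    by_contra hlt
    interval_cases p
    · simp at hdvd; omega
  have hqp : q ≤ p - 1 := Nat.le_of_dvd (by omega) hdvd
  set N : ℕ := ∑ i ∈ Finset.range q, p ^ i with hN
  -- (p^q - 1)/(p-1) = N
  have hmul : (p - 1) * N = p ^ q - 1 := by
    have hz : ((p : ℤ) - 1) * (∑ i ∈ Finset.range q, (p : ℤ) ^ i) = (p : ℤ) ^ q - 1 := by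
      rw [mul_comm]
      exact geom_sum_mul (p : ℤ) q
    have hcast : ((p - 1 : ℕ) : ℤ) * ((N : ℕ) : ℤ) = ((p ^ q - 1 : ℕ) : ℤ) := by
      push_cast [hN, Nat.cast_sub (by omega : 1 ≤ p), Nat.cast_sub (Nat.one_le_pow q p (by omega))]
      exact hz
    exact_mod_cast hcast
  have hdivN : (p ^ q - 1) / (p - 1) = N := by
    apply Nat.div_eq_of_eq_mul_left (by omega : 0 < p - 1)
    rw [← hmul, mul_comm]
  rw [hdivN]
  -- q ∣ N
  have hqN : q ∣ N := by
    have : (N : ZMod q) = 0 := by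
      rw [hN]
      push_cast
      have hp1 : (p : ZMod q) = 1 := by
        have : ((p : ℕ) : ZMod q) = ((1 : ℕ) : ZMod q) := by
          rw [ZMod.natCast_eq_natCast_iff]
          exact ((Nat.modEq_iff_dvd' (by omega)).mpr hdvd).symm
        simpa using this
      simp [hp1]
    exact (ZMod.natCast_eq_zero_iff _ _).mp this
  -- ¬ q^2 ∣ N
  have hq2N : ¬ (q ^ 2 ∣ N) := by
    intro hdvd2
    set m : ℕ := p - 1 with hm
    obtain ⟨c, hc⟩ := hdvd
    have hpm : p = 1 + m := by omega
    -- in ZMod (q^2), t := m-bar satisfies t^2 = 0 and q * t = 0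
    set t : ZMod (q ^ 2) := (m : ZMod (q ^ 2)) with ht
    have ht2 : t * t = 0 := by
      rw [ht, ← Nat.cast_mul, ZMod.natCast_eq_zero_iff]
      rw [hc]
      ring_nf
      exact ⟨c * c, by ring⟩
    have hqt : (q : ZMod (q ^ 2)) * t = 0 := by
      rw [ht, ← Nat.cast_mul, ZMod.natCast_eq_zero_iff]
      rw [hc]
      exact ⟨c, by ring⟩
    have hbin : ∀ i : ℕ, ((1 : ZMod (q ^ 2)) + t) ^ i = 1 + (i : ZMod (q ^ 2)) * t := by
      intro i
      induction i with
      | zero => simp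
      | succ i ih =>
        push_cast
        calc (1 + t) ^ (i + 1) = ((1 + t) ^ i) * (1 + t) := pow_succ _ _
        _ = (1 + (i : ZMod (q ^ 2)) * t) * (1 + t) := by rw [ih]
        _ = 1 + ((i : ZMod (q ^ 2)) + 1) * t + (i : ZMod (q ^ 2)) * (t * t) := by ring
        _ = 1 + ((i : ZMod (q ^ 2)) + 1) * t := by rw [ht2]; ring
    -- N mod q^2 = q
    have hNbar : (N : ZMod (q ^ 2)) = (q : ZMod (q ^ 2)) := by
      rw [hN]
      push_cast
      have hpcast : (p : ZMod (q ^ 2)) = 1 + t := by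
        rw [hpm]; push_cast; rfl
      rw [hpcast]
      have : ∑ i ∈ Finset.range q, ((1 : ZMod (q ^ 2)) + t) ^ i
          = ∑ i ∈ Finset.range q, (1 + (i : ZMod (q ^ 2)) * t) := by
        exact Finset.sum_congr rfl fun i _ => hbin i
      rw [this, Finset.sum_add_distrib]
      simp only [Finset.sum_const, Finset.card_range, nsmul_eq_mul, mul_one]
      have hsum : (∑ i ∈ Finset.range q, (i : ZMod (q ^ 2)) * t) = ((∑ i ∈ Finset.range q, i : ℕ) : ZMod (q ^ 2)) * t := by
        rw [Nat.cast_sum, Finset.sum_mul]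
      rw [hsum]
      -- sum of 0..q-1 = q * s with s = (q-1)/2
      obtain ⟨s, hs⟩ : ∃ s, q - 1 = 2 * s := by
        obtain ⟨k, hk⟩ := hodd
        exact ⟨k, by omega⟩
      have hsumval : (∑ i ∈ Finset.range q, i) = q * s := by
        have h2 := Finset.sum_range_id_mul_two q
        have h3 : q * (q - 1) = 2 * (q * s) := by rw [hs]; ring
        omega
      rw [hsumval]
      push_cast
      rw [mul_assoc, mul_comm (s : ZMod (q^2)) t, ← mul_assoc, hqt]
      ring
    have : (q : ZMod (q ^ 2)) = 0 := by
      rw [← hNbar]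
      exact (ZMod.natCast_eq_zero_iff _ _).mpr hdvd2
    have hdq : q ^ 2 ∣ q := (ZMod.natCast_eq_zero_iff _ _).mp this
    have h5 : q ^ 2 ≤ q := Nat.le_of_dvd (by omega) hdq
    rw [pow_two] at h5
    have h6 : 2 * q ≤ q * q := Nat.mul_le_mul hq2 (le_refl q)
    omega
  -- factorization
  have hN0 : N ≠ 0 := by
    have : 0 < N := Finset.sum_pos (fun i _ => Nat.pow_pos (n := i) (by omega)) ⟨0, by simp; omega⟩
    omega
  have hfact : N.factorization q = 1 := by
    have h1 : 1 ≤ N.factorization q := by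
      rw [← Nat.Prime.pow_dvd_iff_le_factorization hq hN0, pow_one]
      exact hqN
    have h2 : ¬ (2 ≤ N.factorization q) := by
      rw [← Nat.Prime.pow_dvd_iff_le_factorization hq hN0]
      exact hq2N
    omega
  rw [hfact, pow_one]
  -- p - 1 < N / q
  have hlt : (p - 1) * q < N := by
    have h1 : (p - 1) * q ≤ (p - 1) * (p - 1) := Nat.mul_le_mul_left _ hqp
    have h2 : (p - 1) * (p - 1) < p * p := Nat.mul_lt_mul'' (by omega) (by omega)
    have h3 : p * p ≤ p ^ (q - 1) := by
      calc p * p = p ^ 2 := by ring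
      _ ≤ p ^ (q - 1) := Nat.pow_le_pow_right (by omega) (by omega)
    have h4 : p ^ (q - 1) < N := by
      have hqsplit : q = (q - 1) + 1 := by omega
      have : N = (∑ i ∈ Finset.range (q - 1), p ^ i) + p ^ (q - 1) := by
        rw [hN]
        conv_lhs => rw [hqsplit]
        rw [Finset.sum_range_succ]
      have hpos : 0 < ∑ i ∈ Finset.range (q - 1), p ^ i :=
        Finset.sum_pos (fun i _ => Nat.pow_pos (n := i) (by omega)) ⟨0, by simp; omega⟩
      omega
    omega
  exact (Nat.lt_div_iff_mul_lt' hqN _).mpr (by rw [mul_comm]; exact hlt)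

/-- Let `F` be the field of order `p^q` with `q` an odd prime dividing `p - 1`, let
`γ ∈ Fˣ` have order equal to the `q'`-part of `(p^q - 1)/(p - 1)`, let `λ` be a
generator of the Sylow `q`-subgroup of `Fˣ`, and let `σ` be the Frobenius
automorphism.  Then the subgroup `H = ⟨γ, λσ⟩` of `Fˣ ⋊ Gal(F/F_p)` is nonabelian
and has a normal abelian subgroup of index `q`; consequently every irreducible
complex character of `H` has degree `1` or `q`. -/
theorem semilinear_subgroup_cd (p q : ℕ) [Fact p.Prime] (hq : q.Prime) (hq_odd : Odd q)
    (hdvd : q ∣ p - 1)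
    (F : Type) [Field F] [Fintype F] [Algebra (ZMod p) F]
    (hF : Fintype.card F = p ^ q)
    (φ : (F ≃ₐ[ZMod p] F) →* MulAut Fˣ)
    (hφ : ∀ (g : F ≃ₐ[ZMod p] F) (u : Fˣ), ((φ g u : Fˣ) : F) = g u)
    (σ : F ≃ₐ[ZMod p] F) (hσ : ∀ x : F, σ x = x ^ p)
    (gam lam : Fˣ)
    (hgam : orderOf gam =
      ((p ^ q - 1) / (p - 1)) / q ^ (((p ^ q - 1) / (p - 1)).factorization q))
    (hlam : orderOf lam = q ^ ((p ^ q - 1).factorization q)) :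
    (∃ a b : (Subgroup.closure {(⟨gam, 1⟩ : Fˣ ⋊[φ] (F ≃ₐ[ZMod p] F)), ⟨lam, σ⟩} :
        Subgroup (Fˣ ⋊[φ] (F ≃ₐ[ZMod p] F))), a * b ≠ b * a) ∧
      (∃ A : Subgroup (Subgroup.closure {(⟨gam, 1⟩ : Fˣ ⋊[φ] (F ≃ₐ[ZMod p] F)), ⟨lam, σ⟩} :
          Subgroup (Fˣ ⋊[φ] (F ≃ₐ[ZMod p] F))),
        A.Normal ∧ (∀ a b : A, a * b = b * a) ∧ A.index = q) ∧
      ∀ V : FDRep ℂ (Subgroup.closure {(⟨gam, 1⟩ : Fˣ ⋊[φ] (F ≃ₐ[ZMod p] F)), ⟨lam, σ⟩} :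
          Subgroup (Fˣ ⋊[φ] (F ≃ₐ[ZMod p] F))),
        Simple V → Module.finrank ℂ V = 1 ∨ Module.finrank ℂ V = q := by
  have hp : p.Prime := Fact.out
  have hp2 : 2 ≤ p := hp.two_le
  have hq2 : 2 ≤ q := hq.two_le
  have hp3 : 3 ≤ p := by
    by_contra hlt
    interval_cases p
    · simp at hdvd; omega
  -- Frobenius powers
  have hσpow : ∀ (n : ℕ) (x : F), (σ ^ n) x = x ^ p ^ n := by
    intro n
    induction n with
    | zero => intro x; simp
    | succ n ih =>
      intro x
      have h1 : σ ^ (n + 1) = σ * σ ^ n := pow_succ' σ n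
      rw [h1]
      show σ ((σ ^ n) x) = x ^ p ^ (n + 1)
      rw [ih x, hσ, ← pow_mul, ← pow_succ]
  have hσq : σ ^ q = 1 := by
    apply AlgEquiv.ext
    intro x
    rw [hσpow q x, ← hF]
    show x ^ Fintype.card F = (1 : F ≃ₐ[ZMod p] F) x
    rw [FiniteField.pow_card]
    rfl
  have hcardu : Nat.card Fˣ = p ^ q - 1 := by
    rw [Nat.card_units, Nat.card_eq_fintype_card, hF]
  have hppow : p < p ^ q := by
    calc p = p ^ 1 := (pow_one p).symm
    _ < p ^ q := Nat.pow_lt_pow_right (by omega) (by omega)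
  have hσ1 : σ ≠ 1 := by
    intro h1
    obtain ⟨ζ, hζo⟩ := IsCyclic.exists_ofOrder_eq_natCard (α := Fˣ)
    have hζord : orderOf ζ = p ^ q - 1 := by rw [hζo, hcardu]
    have hζp : (ζ : F) ^ p = (ζ : F) := by
      rw [← hσ ζ, h1]; rfl
    have hζunits : ζ ^ p = ζ := Units.ext (by push_cast; exact hζp)
    have hζpow : ζ ^ (p - 1) = 1 := by
      have h2 : ζ ^ (p - 1) * ζ = ζ := by
        rw [← pow_succ]
        have : p - 1 + 1 = p := by omega
        rw [this, hζunits]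
      calc ζ ^ (p - 1) = ζ ^ (p - 1) * ζ * ζ⁻¹ := by group
      _ = ζ * ζ⁻¹ := by rw [h2]
      _ = 1 := by group
    have h3 : orderOf ζ ∣ p - 1 := orderOf_dvd_of_pow_eq_one hζpow
    rw [hζord] at h3
    have h4 := Nat.le_of_dvd (by omega) h3
    omega
  have hσord : orderOf σ = q := by
    have h1 : orderOf σ ∣ q := orderOf_dvd_of_pow_eq_one hσq
    rcases (Nat.Prime.eq_one_or_self_of_dvd hq _ h1) with h2 | h2
    · exact absurd (orderOf_eq_one_iff.mp h2) hσ1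
    · exact h2
  have hφσ : ∀ u : Fˣ, φ σ u = u ^ p := by
    intro u
    apply Units.ext
    rw [hφ, hσ]
    push_cast
    rfl
  -- order of gam is large
  have hbig : p - 1 < orderOf gam := by rw [hgam]; exact numth hp hq hq_odd hdvd
  have hgp : gam ^ p ≠ gam := by
    intro heq
    have h2 : gam ^ (p - 1) * gam = gam := by
      rw [← pow_succ]
      have : p - 1 + 1 = p := by omega
      rw [this, heq]
    have h3 : gam ^ (p - 1) = 1 := by
      calc gam ^ (p - 1) = gam ^ (p - 1) * gam * gam⁻¹ := by group
      _ = gam * gam⁻¹ := by rw [h2]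
      _ = 1 := by group
    have h4 := Nat.le_of_dvd (by omega) (orderOf_dvd_of_pow_eq_one h3)
    omega
  -- the two generators
  set Γ : Fˣ ⋊[φ] (F ≃ₐ[ZMod p] F) := ⟨gam, 1⟩ with hΓdef
  set Λ : Fˣ ⋊[φ] (F ≃ₐ[ZMod p] F) := ⟨lam, σ⟩ with hΛdef
  have hΓinl : Γ = SemidirectProduct.inl gam := by
    ext <;> rfl
  have hΓpow : ∀ n : ℕ, Γ ^ n = SemidirectProduct.inl (gam ^ n) := by
    intro n
    rw [hΓinl, ← map_pow]
  -- commutation relation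
  have hΛsplit : Λ = SemidirectProduct.inl lam * SemidirectProduct.inr σ := by
    rw [hΛdef]; exact SemidirectProduct.mk_eq_inl_mul_inr σ lam
  have hconj : SemidirectProduct.inr (φ := φ) σ * SemidirectProduct.inl gam
      = SemidirectProduct.inl (gam ^ p) * SemidirectProduct.inr σ := by
    have hthis := SemidirectProduct.inl_aut (φ := φ) σ gam
    rw [hφσ, map_inv] at hthis
    rw [hthis]
    group
  have f4 : Λ * Γ = Γ ^ p * Λ := by
    calc Λ * Γ
        = SemidirectProduct.inl lam * (SemidirectProduct.inr σ * SemidirectProduct.inl gam) := by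
          rw [hΛsplit, hΓinl, mul_assoc]
    _ = SemidirectProduct.inl lam * (SemidirectProduct.inl (gam ^ p) * SemidirectProduct.inr σ) := by
          rw [hconj]
    _ = SemidirectProduct.inl (lam * gam ^ p) * SemidirectProduct.inr σ := by
          rw [← mul_assoc, ← map_mul]
    _ = SemidirectProduct.inl (gam ^ p * lam) * SemidirectProduct.inr σ := by
          rw [mul_comm lam]
    _ = Γ ^ p * Λ := by rw [map_mul, hΛsplit, hΓpow, mul_assoc]
  -- nonabelian
  have nonab : Γ * Λ ≠ Λ * Γ := by
    intro heq
    apply hgp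
    have h1 : SemidirectProduct.inl (gam * lam) * SemidirectProduct.inr (φ := φ) σ
        = SemidirectProduct.inl (gam ^ p * lam) * SemidirectProduct.inr σ := by
      calc SemidirectProduct.inl (gam * lam) * SemidirectProduct.inr (φ := φ) σ
          = Γ * Λ := by rw [map_mul, hΓinl, hΛsplit, mul_assoc]
      _ = Λ * Γ := heq
      _ = Γ ^ p * Λ := f4
      _ = SemidirectProduct.inl (gam ^ p * lam) * SemidirectProduct.inr σ := by
          rw [map_mul, hΓpow, hΛsplit, mul_assoc]
    have h2 := mul_right_cancel h1
    have h3 := SemidirectProduct.inl_injective h2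
    exact (mul_right_cancel h3).symm
  have hΓH : Γ ∈ Subgroup.closure {Γ, Λ} := Subgroup.subset_closure (Set.mem_insert _ _)
  have hΛH : Λ ∈ Subgroup.closure {Γ, Λ} :=
    Subgroup.subset_closure (Set.mem_insert_of_mem _ rfl)
  refine ⟨⟨⟨Γ, hΓH⟩, ⟨Λ, hΛH⟩, fun hh => nonab (congrArg Subtype.val hh)⟩, ?_, ?_⟩
  · -- normal abelian subgroup of index q
    set f : (Subgroup.closure {Γ, Λ} : Subgroup (Fˣ ⋊[φ] (F ≃ₐ[ZMod p] F))) →* (F ≃ₐ[ZMod p] F) :=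
      SemidirectProduct.rightHom.comp (Subgroup.closure {Γ, Λ}).subtype with hfdef
    refine ⟨f.ker, MonoidHom.normal_ker f, ?_, ?_⟩
    · -- abelian
      intro x y
      apply Subtype.ext
      apply Subtype.ext
      have hx : (x : (Subgroup.closure {Γ, Λ} : Subgroup _)).1 ∈ SemidirectProduct.rightHom.ker := x.2
      have hy : (y : (Subgroup.closure {Γ, Λ} : Subgroup _)).1 ∈ SemidirectProduct.rightHom.ker := y.2
      rw [← SemidirectProduct.range_inl_eq_ker_rightHom] at hx hy
      obtain ⟨wx, hwx⟩ := hx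
      obtain ⟨wy, hwy⟩ := hy
      show (x.1.1 : Fˣ ⋊[φ] (F ≃ₐ[ZMod p] F)) * y.1.1 = y.1.1 * x.1.1
      rw [← hwx, ← hwy, ← map_mul, ← map_mul, mul_comm]
    · -- index
      have hrange : f.range = Subgroup.zpowers σ := by
        apply le_antisymm
        · rintro - ⟨⟨x, hx⟩, rfl⟩
          show SemidirectProduct.rightHom x ∈ Subgroup.zpowers σ
          induction hx using Subgroup.closure_induction with
          | mem y hy =>
            rcases hy with rfl | hy
            · show SemidirectProduct.rightHom Γ ∈ _
              have : SemidirectProduct.rightHom Γ = 1 := rfl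
              rw [this]
              exact Subgroup.one_mem _
            · rw [Set.mem_singleton_iff] at hy
              subst hy
              exact Subgroup.mem_zpowers σ
          | one => rw [map_one]; exact Subgroup.one_mem _
          | mul a b ha hb iha ihb => rw [map_mul]; exact Subgroup.mul_mem _ iha ihb
          | inv a ha ih => rw [map_inv]; exact Subgroup.inv_mem _ ih
        · rw [Subgroup.zpowers_le]
          exact ⟨⟨Λ, hΛH⟩, rfl⟩
      rw [Subgroup.index_ker, hrange, Nat.card_zpowers, hσord]
  · -- representation degrees
    intro V hS
    haveI := hS
    set a' : (Subgroup.closure {Γ, Λ} : Subgroup (Fˣ ⋊[φ] (F ≃ₐ[ZMod p] F))) := ⟨Γ, hΓH⟩ with ha'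
    set h' : (Subgroup.closure {Γ, Λ} : Subgroup (Fˣ ⋊[φ] (F ≃ₐ[ZMod p] F))) := ⟨Λ, hΛH⟩ with hh'
    have hgen : ∀ g : (Subgroup.closure {Γ, Λ} : Subgroup (Fˣ ⋊[φ] (F ≃ₐ[ZMod p] F))),
        g ∈ Subgroup.closure {a', h'} := by
      have h1 : (((↑) : (Subgroup.closure {Γ, Λ} : Subgroup (Fˣ ⋊[φ] (F ≃ₐ[ZMod p] F))) →
          Fˣ ⋊[φ] (F ≃ₐ[ZMod p] F)) ⁻¹' {Γ, Λ}) = {a', h'} := by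
        ext x
        constructor
        · intro hx
          rcases hx with hx | hx
          · exact Or.inl (Subtype.ext hx)
          · exact Or.inr (Subtype.ext hx)
        · intro hx
          rcases hx with rfl | hx
          · exact Or.inl rfl
          · rw [Set.mem_singleton_iff] at hx
            subst hx
            exact Or.inr rfl
      intro g
      rw [← h1]
      rw [Subgroup.closure_closure_coe_preimage]
      trivial
    have r1 : h' * a' = a' ^ p * h' := by
      apply Subtype.ext
      show Λ * Γ = ((a' ^ p : _) : Fˣ ⋊[φ] (F ≃ₐ[ZMod p] F)) * Λ
      rw [SubmonoidClass.coe_pow]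
      exact f4
    have r2 : h' ^ q * a' = a' * h' ^ q := by
      apply Subtype.ext
      show ((h' ^ q : _) : Fˣ ⋊[φ] (F ≃ₐ[ZMod p] F)) * Γ = Γ * ((h' ^ q : _) : _)
      rw [SubmonoidClass.coe_pow]
      have hq1 : SemidirectProduct.rightHom (Λ ^ q) = 1 := by
        rw [map_pow]
        show σ ^ q = 1
        exact hσq
      have : Λ ^ q ∈ (SemidirectProduct.inl (φ := φ)).range := by
        rw [SemidirectProduct.range_inl_eq_ker_rightHom]
        exact hq1
      obtain ⟨w, hw⟩ := this
      rw [← hw, hΓinl, ← map_mul, ← map_mul, mul_comm]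
    have r3 : a' ^ (p ^ q - 1) = 1 := by
      apply Subtype.ext
      show ((a' ^ (p ^ q - 1) : _) : Fˣ ⋊[φ] (F ≃ₐ[ZMod p] F)) = 1
      rw [SubmonoidClass.coe_pow]
      show Γ ^ (p ^ q - 1) = 1
      rw [hΓpow]
      have hgam1 : gam ^ (p ^ q - 1) = 1 := by
        rw [← hcardu]
        exact pow_card_eq_one'
      rw [hgam1, map_one]
    exact rep_dim_one_or_q hq hp2 a' h' hgen r1 r2 r3 V
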